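/- arXiv:2507.23423 — 2 statements merged into one kernel-verified Lean document; each statement's English description precedes it below -/
import Mathlib

section
/- Let g be an M♮-convex function with finite nonempty effective domain and let b : E → {0,1}. Let k be an integer with k̲ + 1 ≤ k ≤ k̄ and let x_k ∈ 𝒯_k. Then there exists a transition (u,v) with respect to x_k, with u ∈ E_1 and v ∈ E_0 ∪ {z}, such that x_k − χ_u + χ_v ∈ 𝒯_{k−1}. -/
open scoped BigOperators

/-- Characteristic vector of a singleton `{u}`. -/
def chiv {E : Type*} [DecidableEq E] (u : E) : E → ℤ := fun e => if e = u then 1 else 0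

/-- Characteristic vector allowing the dummy symbol `z` (modelled as `none`), with `χ_z = 0`. -/
def chiOpt {E : Type*} [DecidableEq E] (v : Option E) : E → ℤ :=
  fun e => match v with
  | none => 0
  | some w => chiv w e

/-- M♮-convexity (with nonempty effective domain) for `g : (E → ℤ) → ℝ ∪ {+∞}`. -/
def MnatConvex {E : Type*} [DecidableEq E] (g : (E → ℤ) → WithTop ℝ) : Prop :=
  (∃ x, g x < ⊤) ∧
  ∀ x y : E → ℤ, g x < ⊤ → g y < ⊤ → ∀ u : E, y u < x u →
    (g (x - chiv u) + g (y + chiv u) ≤ g x + g y) ∨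
    (∃ v : E, x v < y v ∧
      g (x - chiv u + chiv v) + g (y + chiv u - chiv v) ≤ g x + g y)

/-- `⟨b,x⟩ = ∑ e, b e * x e`. -/
def innerb {E : Type*} [Fintype E] (b : E → ℤ) (x : E → ℤ) : ℤ := ∑ e, b e * x e

/-- `𝒯_i`: the minimizers of `g` on `𝒫_i = {x ∈ dom g : ⟨b,x⟩ = i}`. -/
def Tset {E : Type*} [Fintype E] (g : (E → ℤ) → WithTop ℝ) (b : E → ℤ) (i : ℤ) :
    Set (E → ℤ) :=
  {x | g x < ⊤ ∧ innerb b x = i ∧ ∀ y : E → ℤ, g y < ⊤ → innerb b y = i → g x ≤ g y}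

/-- A transition `(u,v)` with respect to `x`: `u ∈ E₁`, `v ∈ E₀ ∪ {z}`, and
`x - χ_u + χ_v ∈ dom g`. -/
def IsTransition {E : Type*} [DecidableEq E] (g : (E → ℤ) → WithTop ℝ) (b : E → ℤ)
    (x : E → ℤ) (u : E) (v : Option E) : Prop :=
  b u = 1 ∧ (∀ w : E, v = some w → b w = 0) ∧ g (x - chiv u + chiOpt v) < ⊤

/-- The cost `g(x;u,v) = g(x - χ_u + χ_v) - g(x)` of a transition (as a real number;
both values are finite for transitions with respect to `x ∈ dom g`). -/
noncomputable def transCost {E : Type*} [DecidableEq E] (g : (E → ℤ) → WithTop ℝ)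
    (x : E → ℤ) (u : E) (v : Option E) : ℝ :=
  (g (x - chiv u + chiOpt v)).untopD 0 - (g x).untopD 0

/-- A minimum transition with respect to `x`. -/
def IsMinTransition {E : Type*} [Fintype E] [DecidableEq E] (g : (E → ℤ) → WithTop ℝ)
    (b : E → ℤ) (x : E → ℤ) (u : E) (v : Option E) : Prop :=
  IsTransition g b x u v ∧
    ∀ (u' : E) (v' : Option E), IsTransition g b x u' v' →
      transCost g x u v ≤ transCost g x u' v'

section Helpers

variable {E : Type*} [Fintype E] [DecidableEq E]

lemma chiOpt_none : chiOpt (none : Option E) = (0 : E → ℤ) := rfl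

lemma chiOpt_some (v : E) : chiOpt (some v) = chiv v := rfl

lemma innerb_add (b x y : E → ℤ) : innerb b (x + y) = innerb b x + innerb b y := by
  simp [innerb, mul_add, Finset.sum_add_distrib]

lemma innerb_sub (b x y : E → ℤ) : innerb b (x - y) = innerb b x - innerb b y := by
  simp [innerb, mul_sub, Finset.sum_sub_distrib]

lemma innerb_chiv (b : E → ℤ) (u : E) : innerb b (chiv u) = b u := by
  simp [innerb, chiv, mul_ite, Finset.sum_ite_eq']

lemma exists_dec (b : E → ℤ) (hb : ∀ e, b e = 0 ∨ b e = 1) {x y : E → ℤ}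
    (h : innerb b y < innerb b x) : ∃ u, b u = 1 ∧ y u < x u := by
  by_contra hc
  push_neg at hc
  have hle : innerb b x ≤ innerb b y := by
    apply Finset.sum_le_sum
    intro e _
    rcases hb e with h0 | h1
    · simp [h0]
    · have := hc e h1
      simp only [h1, one_mul]
      omega
  omega

lemma dist_lt (x y : E → ℤ) (u v : E) (hu : y u < x u) (hv : x v < y v) :
    ∑ e, (x e - y e - chiv u e + chiv v e).natAbs < ∑ e, (x e - y e).natAbs := by
  have huv : u ≠ v := by intro h; subst h; omega
  apply Finset.sum_lt_sum
  · intro e _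
    by_cases he : e = u
    · subst he
      simp [chiv, huv]
      omega
    · by_cases he2 : e = v
      · subst he2
        simp [chiv, he]
        omega
      · simp [chiv, he, he2]
  · refine ⟨u, Finset.mem_univ u, ?_⟩
    simp [chiv, huv]
    omega

lemma wt_cancel {a b c d : WithTop ℝ} (hb : b ≠ ⊤) (h : a + c ≤ b + d) (h2 : b ≤ a) :
    c ≤ d := by
  have h3 : b + c ≤ b + d := le_trans (add_le_add_left h2 c) h
  exact (WithTop.add_le_add_iff_left hb).1 h3

lemma exists_level (g : (E → ℤ) → WithTop ℝ) (b : E → ℤ) (hg : MnatConvex g)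
    (hb : ∀ e, b e = 0 ∨ b e = 1) :
    ∀ n : ℕ, ∀ x y : E → ℤ, g x < ⊤ → g y < ⊤ → innerb b y < innerb b x →
      (∑ e, (x e - y e).natAbs) ≤ n → ∃ x', g x' < ⊤ ∧ innerb b x' = innerb b x - 1 := by
  intro n
  induction n with
  | zero =>
    intro x y hx hy hlt hd
    exfalso
    have hxy : ∀ e, x e = y e := by
      intro e
      have h0 := Finset.sum_eq_zero_iff.1 (Nat.le_zero.1 hd) e (Finset.mem_univ e)
      omega
    have : innerb b x = innerb b y :=
      Finset.sum_congr rfl (fun e _ => by rw [hxy e])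
    omega
  | succ n ih =>
    intro x y hx hy hlt hd
    obtain ⟨u, hbu, hu⟩ := exists_dec b hb hlt
    have hsum : g x + g y < ⊤ := WithTop.add_lt_top.2 ⟨hx, hy⟩
    rcases hg.2 x y hx hy u hu with h | ⟨v, hv, h⟩
    · have hfin := lt_of_le_of_lt h hsum
      have hx' : g (x - chiv u) < ⊤ := (WithTop.add_lt_top.1 hfin).1
      exact ⟨x - chiv u, hx', by rw [innerb_sub, innerb_chiv, hbu]⟩
    · have hfin := lt_of_le_of_lt h hsum
      have hx' : g (x - chiv u + chiv v) < ⊤ := (WithTop.add_lt_top.1 hfin).1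
      have hib : innerb b (x - chiv u + chiv v) = innerb b x - b u + b v := by
        rw [innerb_add, innerb_sub, innerb_chiv, innerb_chiv]
      rcases hb v with h0 | h1
      · exact ⟨x - chiv u + chiv v, hx', by rw [hib, hbu, h0]; ring⟩
      · have hlt' : innerb b y < innerb b (x - chiv u + chiv v) := by
          rw [hib, hbu, h1]; omega
        have hd' : (∑ e, ((x - chiv u + chiv v) e - y e).natAbs) ≤ n := by
          have h1' := dist_lt x y u v hu hv
          have h2' : (∑ e, ((x - chiv u + chiv v) e - y e).natAbs)
              = ∑ e, (x e - y e - chiv u e + chiv v e).natAbs := by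
            apply Finset.sum_congr rfl
            intro e _
            congr 1
            simp only [Pi.add_apply, Pi.sub_apply]
            ring
          omega
        obtain ⟨x', hx'f, hx'i⟩ := ih (x - chiv u + chiv v) y hx' hy hlt' hd'
        refine ⟨x', hx'f, ?_⟩
        rw [hx'i, hib, hbu, h1]
        ring

end Helpers

/-- for `x_k ∈ 𝒯_k` with `k̲+1 ≤ k ≤ k̄`, there exists a transition
`(u,v)` with respect to `x_k` such that `x_k - χ_u + χ_v ∈ 𝒯_{k-1}`. -/
theorem stmt_4 {E : Type*} [Fintype E] [DecidableEq E] [Nonempty E]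
    (g : (E → ℤ) → WithTop ℝ) (b : E → ℤ)
    (hg : MnatConvex g)
    (hfin : {x : E → ℤ | g x < ⊤}.Finite)
    (hb : ∀ e : E, b e = 0 ∨ b e = 1)
    (kmin kmax : ℤ)
    (hkmin : (Tset g b kmin).Nonempty ∧ ∀ k : ℤ, (Tset g b k).Nonempty → kmin ≤ k)
    (hkmax : (Tset g b kmax).Nonempty ∧ ∀ k : ℤ, (Tset g b k).Nonempty → k ≤ kmax)
    (k : ℤ) (hk1 : kmin + 1 ≤ k) (hk2 : k ≤ kmax)
    (xk : E → ℤ) (hxk : xk ∈ Tset g b k) :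
    ∃ (u : E) (v : Option E), IsTransition g b xk u v ∧
      xk - chiv u + chiOpt v ∈ Tset g b (k - 1) := by
  obtain ⟨hxf, hxi, hxmin⟩ := hxk
  -- 𝒫_{k-1} is nonempty
  obtain ⟨y0, hy0f, hy0i, _⟩ := hkmin.1
  have hy0lt : innerb b y0 < innerb b xk := by rw [hy0i, hxi]; omega
  obtain ⟨w0, hw0f, hw0i⟩ := exists_level g b hg hb (∑ e, (xk e - y0 e).natAbs)
    xk y0 hxf hy0f hy0lt le_rfl
  rw [hxi] at hw0i
  -- 𝒯_{k-1} is nonempty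
  have hSfin : {x : E → ℤ | g x < ⊤ ∧ innerb b x = k - 1}.Finite :=
    hfin.subset (fun x hx => hx.1)
  obtain ⟨y1, hy1S, hy1min⟩ := Set.exists_min_image _ g hSfin ⟨w0, hw0f, hw0i⟩
  have hTne : (Tset g b (k - 1)).Nonempty :=
    ⟨y1, hy1S.1, hy1S.2, fun w hw1 hw2 => hy1min w ⟨hw1, hw2⟩⟩
  have hTfin : (Tset g b (k - 1)).Finite := hfin.subset (fun x hx => hx.1)
  -- choose y ∈ 𝒯_{k-1} minimizing the ℓ¹ distance to xk
  obtain ⟨y, hyT, hymin⟩ := Set.exists_min_image (Tset g b (k - 1))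
    (fun y => ∑ e, (xk e - y e).natAbs) hTfin hTne
  obtain ⟨hyf, hyi, hygmin⟩ := hyT
  obtain ⟨u, hbu, hu⟩ := exists_dec b hb (show innerb b y < innerb b xk by
    rw [hyi, hxi]; omega)
  have hsum : g xk + g y < ⊤ := WithTop.add_lt_top.2 ⟨hxf, hyf⟩
  rcases hg.2 xk y hxf hyf u hu with h | ⟨v, hv, h⟩
  · -- case (i): transition (u, z)
    have hfin2 := lt_of_le_of_lt h hsum
    have haf : g (xk - chiv u) < ⊤ := (WithTop.add_lt_top.1 hfin2).1
    have hai : innerb b (xk - chiv u) = k - 1 := by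
      rw [innerb_sub, innerb_chiv, hbu, hxi]
    have hcf : g (y + chiv u) < ⊤ := (WithTop.add_lt_top.1 hfin2).2
    have hci : innerb b (y + chiv u) = k := by
      rw [innerb_add, innerb_chiv, hbu, hyi]; ring
    have hxc : g xk ≤ g (y + chiv u) := hxmin _ hcf hci
    have hay : g (xk - chiv u) ≤ g y :=
      wt_cancel hxf.ne (by rw [add_comm] at h; exact h) hxc
    refine ⟨u, none, ⟨hbu, fun w hw => by simp at hw, ?_⟩, ?_⟩
    · rw [chiOpt_none, add_zero]; exact haf
    · rw [chiOpt_none, add_zero]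
      exact ⟨haf, hai, fun w hw1 hw2 => le_trans hay (hygmin w hw1 hw2)⟩
  · -- case (ii)
    have hfin2 := lt_of_le_of_lt h hsum
    have haf : g (xk - chiv u + chiv v) < ⊤ := (WithTop.add_lt_top.1 hfin2).1
    have hcf : g (y + chiv u - chiv v) < ⊤ := (WithTop.add_lt_top.1 hfin2).2
    have hai : innerb b (xk - chiv u + chiv v) = k - 1 + b v := by
      rw [innerb_add, innerb_sub, innerb_chiv, innerb_chiv, hbu, hxi]
    have hci : innerb b (y + chiv u - chiv v) = k - b v := by
      rw [innerb_sub, innerb_add, innerb_chiv, innerb_chiv, hbu, hyi]; ring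
    rcases hb v with h0 | h1
    · -- b v = 0: transition (u, v)
      rw [h0] at hai hci
      have hxc : g xk ≤ g (y + chiv u - chiv v) := hxmin _ hcf (by rw [hci]; ring)
      have hay : g (xk - chiv u + chiv v) ≤ g y :=
        wt_cancel hxf.ne (by rw [add_comm] at h; exact h) hxc
      refine ⟨u, some v, ⟨hbu, fun w hw => by injection hw with hw'; rw [← hw']; exact h0, ?_⟩, ?_⟩
      · rw [chiOpt_some]; exact haf
      · rw [chiOpt_some]
        exact ⟨haf, by rw [hai]; ring, fun w hw1 hw2 => le_trans hay (hygmin w hw1 hw2)⟩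
    · -- b v = 1: contradiction with minimal distance
      exfalso
      rw [h1] at hai hci
      have hxa : g xk ≤ g (xk - chiv u + chiv v) := hxmin _ haf (by rw [hai]; ring)
      have hcy : g (y + chiv u - chiv v) ≤ g y := wt_cancel hxf.ne h hxa
      have hcT : y + chiv u - chiv v ∈ Tset g b (k - 1) :=
        ⟨hcf, by rw [hci], fun w hw1 hw2 => le_trans hcy (hygmin w hw1 hw2)⟩
      have hdlt := dist_lt xk y u v hu hv
      have heq : (∑ e, (xk e - (y + chiv u - chiv v) e).natAbs)
          = ∑ e, (xk e - y e - chiv u e + chiv v e).natAbs := by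
        apply Finset.sum_congr rfl
        intro e _
        congr 1
        simp only [Pi.add_apply, Pi.sub_apply]
        ring
      have := hymin _ hcT
      simp only [heq] at this
      omega
end

section
/- Let g be an M♮-convex function with finite nonempty effective domain and let b : E → {0,1}. Let {x_k}_{k=k̲}^{k̄} be a sequence such that x_k ∈ 𝒯_k for all k and, for each k ∈ {k̲+1, …, k̄}, x_{k−1} = x_k − χ_{u_k} + χ_{v_k} for some minimum transition (u_k, v_k) with respect to x_k. Assume k̲ + 2 ≤ k̄. If there exists an index j ∈ {k̲+1, …, k̄} such that g(x_j) < g(x_{j−1}), then g(x_i) < g(x_{i−1}) for all i ∈ {k̲+1, …, j}. -/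
open scoped BigOperators

section aux

variable {E : Type*} [Fintype E] [DecidableEq E]

lemma innerb_add_chiv (b y : E → ℤ) (w : E) :
    innerb b (y + chiv w) = innerb b y + b w := by
  simp only [innerb, chiv, Pi.add_apply, mul_add, Finset.sum_add_distrib, mul_ite, mul_one,
    mul_zero, Finset.sum_ite_eq', Finset.mem_univ, if_true]

lemma innerb_sub_chiv (b y : E → ℤ) (w : E) :
    innerb b (y - chiv w) = innerb b y - b w := by
  simp only [innerb, chiv, Pi.sub_apply, mul_sub, Finset.sum_sub_distrib, mul_ite, mul_one,
    mul_zero, Finset.sum_ite_eq', Finset.mem_univ, if_true]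

lemma conv_step (g : (E → ℤ) → WithTop ℝ) (b : E → ℤ)
    (hg : MnatConvex g) (hfin : {x : E → ℤ | g x < ⊤}.Finite)
    (hb : ∀ e : E, b e = 0 ∨ b e = 1) (k : ℤ)
    (m : E → ℤ) (hm : m ∈ Tset g b k)
    (X0 : E → ℤ) (hX0 : X0 ∈ Tset g b (k+1))
    (Y0 : E → ℤ) (hY0 : Y0 ∈ Tset g b (k-1)) :
    g m + g m ≤ g X0 + g Y0 := by
  classical
  set S : Set ((E → ℤ) × (E → ℤ)) := (Tset g b (k+1)) ×ˢ (Tset g b (k-1)) with hS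
  have hSfin : S.Finite := by
    apply (hfin.prod hfin).subset
    rintro ⟨p, q⟩ ⟨hp, hq⟩
    exact ⟨hp.1, hq.1⟩
  have hSne : S.Nonempty := ⟨(X0, Y0), hX0, hY0⟩
  obtain ⟨⟨X, Y⟩, hXYS, hminX⟩ :=
    Set.exists_min_image S (fun p => ∑ e, |p.1 e - p.2 e|) hSfin hSne
  obtain ⟨hXmem, hYmem⟩ := hXYS
  have hgX : g X = g X0 :=
    le_antisymm (hXmem.2.2 X0 hX0.1 hX0.2.1) (hX0.2.2 X hXmem.1 hXmem.2.1)
  have hgY : g Y = g Y0 :=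
    le_antisymm (hYmem.2.2 Y0 hY0.1 hY0.2.1) (hY0.2.2 Y hYmem.1 hYmem.2.1)
  rw [← hgX, ← hgY]
  -- find u with b u = 1 and Y u < X u
  have hsum : (∑ _e : E, (0:ℤ)) < ∑ e : E, b e * (X e - Y e) := by
    have : ∑ e, b e * (X e - Y e) = innerb b X - innerb b Y := by
      simp [innerb, mul_sub, Finset.sum_sub_distrib]
    rw [this, hXmem.2.1, hYmem.2.1]
    simp
  obtain ⟨u, -, hu0⟩ := Finset.exists_lt_of_sum_lt hsum
  have hbu : b u = 1 := by
    rcases hb u with h | h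
    · rw [h] at hu0; simp at hu0
    · exact h
  have hYXu : Y u < X u := by
    rw [hbu] at hu0; omega
  have hXYtop : g X + g Y < ⊤ := WithTop.add_lt_top.2 ⟨hXmem.1, hYmem.1⟩
  rcases hg.2 X Y hXmem.1 hYmem.1 u hYXu with hle | ⟨v, hXYv, hle⟩
  · -- case (i)
    have htop : g (X - chiv u) + g (Y + chiv u) < ⊤ := lt_of_le_of_lt hle hXYtop
    have h1 : g (X - chiv u) < ⊤ := (WithTop.add_lt_top.1 htop).1
    have h2 : g (Y + chiv u) < ⊤ := (WithTop.add_lt_top.1 htop).2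
    have l1 : innerb b (X - chiv u) = k := by
      rw [innerb_sub_chiv, hXmem.2.1, hbu]; ring
    have l2 : innerb b (Y + chiv u) = k := by
      rw [innerb_add_chiv, hYmem.2.1, hbu]; ring
    exact le_trans (add_le_add (hm.2.2 _ h1 l1) (hm.2.2 _ h2 l2)) hle
  · rcases hb v with hbv | hbv
    · -- case (ii), b v = 0
      have htop : g (X - chiv u + chiv v) + g (Y + chiv u - chiv v) < ⊤ :=
        lt_of_le_of_lt hle hXYtop
      have h1 : g (X - chiv u + chiv v) < ⊤ := (WithTop.add_lt_top.1 htop).1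
      have h2 : g (Y + chiv u - chiv v) < ⊤ := (WithTop.add_lt_top.1 htop).2
      have l1 : innerb b (X - chiv u + chiv v) = k := by
        rw [innerb_add_chiv, innerb_sub_chiv, hXmem.2.1, hbu, hbv]; ring
      have l2 : innerb b (Y + chiv u - chiv v) = k := by
        rw [innerb_sub_chiv, innerb_add_chiv, hYmem.2.1, hbu, hbv]; ring
      exact le_trans (add_le_add (hm.2.2 _ h1 l1) (hm.2.2 _ h2 l2)) hle
    · -- case (ii), b v = 1 : contradiction with minimality
      exfalso
      set X' := X - chiv u + chiv v with hX'
      set Y' := Y + chiv u - chiv v with hY'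
      have htop : g X' + g Y' < ⊤ := lt_of_le_of_lt hle hXYtop
      have h1 : g X' < ⊤ := (WithTop.add_lt_top.1 htop).1
      have h2 : g Y' < ⊤ := (WithTop.add_lt_top.1 htop).2
      have l1 : innerb b X' = k + 1 := by
        rw [hX', innerb_add_chiv, innerb_sub_chiv, hXmem.2.1, hbu, hbv]; ring
      have l2 : innerb b Y' = k - 1 := by
        rw [hY', innerb_sub_chiv, innerb_add_chiv, hYmem.2.1, hbu, hbv]; ring
      have hXX' : g X ≤ g X' := hXmem.2.2 X' h1 l1
      have hYY' : g Y ≤ g Y' := hYmem.2.2 Y' h2 l2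
      have hX'X : g X' ≤ g X := by
        have h3 : g X' + g Y ≤ g X + g Y :=
          le_trans (add_le_add_right hYY' _) hle
        exact (WithTop.add_le_add_iff_right hYmem.1.ne).1 h3
      have hEq : g X' = g X := le_antisymm hX'X hXX'
      have hX'mem : X' ∈ Tset g b (k+1) :=
        ⟨h1, l1, fun y hy hly => hEq ▸ hXmem.2.2 y hy hly⟩
      have hpair : (X', Y) ∈ S := ⟨hX'mem, hYmem⟩
      have hmin2 := hminX (X', Y) hpair
      simp only at hmin2
      have huv : u ≠ v := by
        intro h; rw [h] at hYXu; omega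
      have key : ∀ e, |X' e - Y e| =
          |X e - Y e| + ((if e = u then (-1:ℤ) else 0) + (if e = v then (-1:ℤ) else 0)) := by
        intro e
        have hXe : X' e = X e - (if e = u then 1 else 0) + (if e = v then 1 else 0) := by
          simp [hX', chiv]
        by_cases he : e = u
        · subst he
          rw [hXe]
          simp [huv]
          rw [abs_of_nonneg (by omega : (0:ℤ) ≤ X e - 1 - Y e),
            abs_of_nonneg (by omega : (0:ℤ) ≤ X e - Y e)]
          ring
        · by_cases he' : e = v
          · subst he'
            rw [hXe]
            simp [he]
            rw [abs_of_nonpos (by omega : X e + 1 - Y e ≤ 0),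
              abs_of_nonpos (by omega : X e - Y e ≤ 0)]
            ring
          · rw [hXe]
            simp [he, he']
      have hsum2 : ∑ e, |X' e - Y e| = (∑ e, |X e - Y e|) - 2 := by
        rw [Finset.sum_congr rfl (fun e _ => key e)]
        rw [Finset.sum_add_distrib, Finset.sum_add_distrib]
        simp [Finset.sum_ite_eq', huv]
        ring
      omega

end aux

section aux2
variable {E : Type*} [Fintype E] [DecidableEq E]

lemma coe_untop' {a : WithTop ℝ} (h : a ≠ ⊤) : a = ((a.untopD 0 : ℝ) : WithTop ℝ) := by
  obtain ⟨c, hc⟩ := WithTop.ne_top_iff_exists.1 h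
  rw [← hc, WithTop.untopD_coe]

end aux2

/-- along a sequence generated by minimum transitions, once the
objective `g` strictly increases (as `k` decreases), it keeps strictly increasing. -/
theorem stmt_6 {E : Type*} [Fintype E] [DecidableEq E] [Nonempty E]
    (g : (E → ℤ) → WithTop ℝ) (b : E → ℤ)
    (hg : MnatConvex g)
    (hfin : {x : E → ℤ | g x < ⊤}.Finite)
    (hb : ∀ e : E, b e = 0 ∨ b e = 1)
    (kmin kmax : ℤ)
    (hkmin : (Tset g b kmin).Nonempty ∧ ∀ k : ℤ, (Tset g b k).Nonempty → kmin ≤ k)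
    (hkmax : (Tset g b kmax).Nonempty ∧ ∀ k : ℤ, (Tset g b k).Nonempty → k ≤ kmax)
    (x : ℤ → (E → ℤ))
    (hxk : ∀ k : ℤ, kmin ≤ k → k ≤ kmax → x k ∈ Tset g b k)
    (hstep : ∀ k : ℤ, kmin + 1 ≤ k → k ≤ kmax →
      ∃ (u : E) (v : Option E), IsMinTransition g b (x k) u v ∧
        x (k - 1) = x k - chiv u + chiOpt v)
    (hgap : kmin + 2 ≤ kmax)
    (j : ℤ) (hj1 : kmin + 1 ≤ j) (hj2 : j ≤ kmax)
    (hgj : g (x j) < g (x (j - 1))) :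
    ∀ i : ℤ, kmin + 1 ≤ i → i ≤ j → g (x i) < g (x (i - 1)) := by
  intro i hi1 hij
  set r : ℤ → ℝ := fun k => (g (x k)).untopD 0 with hr
  have hcoe : ∀ k : ℤ, kmin ≤ k → k ≤ kmax → g (x k) = ((r k : ℝ) : WithTop ℝ) :=
    fun k h1 h2 => coe_untop' (hxk k h1 h2).1.ne
  have hconv : ∀ k : ℤ, kmin + 1 ≤ k → k + 1 ≤ kmax →
      r k + r k ≤ r (k+1) + r (k-1) := by
    intro k h1 h2
    have h := conv_step g b hg hfin hb k
      (x k) (hxk k (by omega) (by omega))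
      (x (k+1)) (hxk (k+1) (by omega) (by omega))
      (x (k-1)) (hxk (k-1) (by omega) (by omega))
    rw [hcoe k (by omega) (by omega), hcoe (k+1) (by omega) (by omega),
      hcoe (k-1) (by omega) (by omega), ← WithTop.coe_add, ← WithTop.coe_add,
      WithTop.coe_le_coe] at h
    exact h
  have hrj : r j < r (j-1) := by
    rw [hcoe j (by omega) (by omega), hcoe (j-1) (by omega) (by omega),
      WithTop.coe_lt_coe] at hgj
    exact hgj
  have claim : ∀ n : ℕ, ∀ i : ℤ, kmin + 1 ≤ i → i + n = j →
      r i - r (i-1) ≤ r j - r (j-1) := by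
    intro n
    induction n with
    | zero =>
      intro i _ h
      have : i = j := by omega
      subst this; exact le_refl _
    | succ n ih =>
      intro i h1 h2
      have hstep := hconv i h1 (by omega)
      have ih2 := ih (i+1) (by omega) (by omega)
      have : (i:ℤ) + 1 - 1 = i := by ring
      rw [this] at ih2
      linarith
  have hfinal : r i - r (i-1) ≤ r j - r (j-1) := by
    apply claim (j - i).toNat i hi1
    omega
  have : r i < r (i-1) := by linarith
  rw [hcoe i (by omega) (by omega), hcoe (i-1) (by omega) (by omega), WithTop.coe_lt_coe]
  exact this
end
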